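/- Let P be a finite set of at least three points in the plane ℝ² that is not contained in a single line. Then the point visibility graph of P contains a Hamiltonian cycle. -/

import Mathlib

/-- Two points `p q` are visible to each other with respect to the point set `P`
if they are distinct and no point of `P` lies in the open segment between them. -/
def Visible (P : Finset (ℝ × ℝ)) (p q : ℝ × ℝ) : Prop :=
  p ≠ q ∧ ∀ r ∈ P, r ∉ openSegment ℝ p q

/-- The point visibility graph of a finite point set `P` in the plane. -/
def PVG (P : Finset (ℝ × ℝ)) : SimpleGraph {x : ℝ × ℝ // x ∈ P} where
  Adj u v := Visible P u.1 v.1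
  symm := by
    constructor
    rintro u v ⟨hne, h⟩
    exact ⟨hne.symm, fun r hr hmem => h r hr (by rwa [openSegment_symm] at hmem)⟩
  loopless := by constructor; rintro u ⟨hne, -⟩; exact hne rfl

namespace StarPoly


def cross (u v : ℝ × ℝ) : ℝ := u.1 * v.2 - u.2 * v.1

def nsq (u : ℝ × ℝ) : ℝ := u.1 ^ 2 + u.2 ^ 2

def Up (v : ℝ × ℝ) : Prop := 0 < v.2 ∨ (v.2 = 0 ∧ 0 < v.1)

lemma Up.ne_zero {v : ℝ × ℝ} (h : Up v) : v ≠ 0 := by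
  intro hv
  subst hv
  rcases h with h | ⟨h1, h2⟩
  · exact lt_irrefl 0 h
  · exact lt_irrefl 0 h2

lemma Up.nsq_pos {v : ℝ × ℝ} (h : Up v) : 0 < nsq v := by
  rcases h with h | ⟨h1, h2⟩ <;> unfold nsq <;> nlinarith

lemma Up.add {u v : ℝ × ℝ} (hu : Up u) (hv : Up v) : Up (u + v) := by
  have e1 : (u + v).1 = u.1 + v.1 := rfl
  have e2 : (u + v).2 = u.2 + v.2 := rfl
  rcases hu with h | ⟨h1, h2⟩ <;> rcases hv with g | ⟨g1, g2⟩
  · left; rw [e2]; linarith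
  · left; rw [e2]; linarith
  · left; rw [e2]; linarith
  · right; rw [e1, e2]; constructor <;> linarith

lemma Up.smul {t : ℝ} {v : ℝ × ℝ} (ht : 0 < t) (hv : Up v) : Up (t • v) := by
  have e1 : (t • v).1 = t * v.1 := rfl
  have e2 : (t • v).2 = t * v.2 := rfl
  rcases hv with h | ⟨h1, h2⟩
  · left; rw [e2]; positivity
  · right; rw [e1, e2, h1]; constructor
    · ring
    · positivity

lemma Up.not_neg {v : ℝ × ℝ} (h : Up v) (h' : Up (-v)) : False := by
  have e1 : (-v).1 = -v.1 := rfl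
  have e2 : (-v).2 = -v.2 := rfl
  rcases h with h | ⟨h1, h2⟩ <;> rcases h' with g | ⟨g1, g2⟩ <;>
    rw [e1] at * <;> rw [e2] at * <;> first
      | linarith
      | (rw [e2] at g; linarith)
      | (rw [e2] at g1; rw [e1] at g2; linarith)

lemma cross_self (u : ℝ × ℝ) : cross u u = 0 := by unfold cross; ring

lemma cross_anticomm (u v : ℝ × ℝ) : cross u v = - cross v u := by unfold cross; ring

lemma cross_identity (u v w : ℝ × ℝ) :
    cross u v • w + cross v w • u = cross u w • v := by
  unfold cross
  ext <;> simp [Prod.smul_def, smul_eq_mul] <;> ring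

lemma same_ray {u v : ℝ × ℝ} (hu : Up u) (hv : Up v) (h : cross u v = 0) :
    ∃ t : ℝ, 0 < t ∧ v = t • u := by
  unfold cross at h
  rcases hu with h2 | ⟨h2, h1⟩
  · -- u.2 > 0
    refine ⟨v.2 / u.2, ?_, ?_⟩
    · have hv2 : 0 < v.2 := by
        rcases hv with g | ⟨g1, g2⟩
        · exact g
        · -- v.2 = 0, v.1 > 0 : then u.1 * 0 = u.2 * v.1 > 0, contradiction
          exfalso
          rw [g1] at h
          nlinarith
      positivity
    · have : v.1 = u.1 * v.2 / u.2 := by field_simp; nlinarith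
      ext
      · show v.1 = v.2 / u.2 * u.1
        rw [this]; ring
      · show v.2 = v.2 / u.2 * u.2
        field_simp
  · -- u.2 = 0, u.1 > 0
    have hv2 : v.2 = 0 := by
      have : u.1 * v.2 = 0 := by rw [h2] at h; linarith
      rcases mul_eq_zero.mp this with h' | h'
      · linarith
      · exact h'
    have hv1 : 0 < v.1 := by
      rcases hv with g | ⟨g1, g2⟩
      · exfalso; linarith
      · exact g2
    refine ⟨v.1 / u.1, by positivity, ?_⟩
    ext
    · show v.1 = v.1 / u.1 * u.1
      field_simp
    · show v.2 = v.1 / u.1 * u.2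
      rw [hv2, h2]; ring

/-- transitivity of the ccw (weak) ordering on the upper half-plane -/
lemma trans_ge {u v w : ℝ × ℝ} (hu : Up u) (hv : Up v) (hw : Up w)
    (h1 : 0 ≤ cross u v) (h2 : 0 ≤ cross v w) : 0 ≤ cross u w := by
  by_contra hC
  push_neg at hC
  have hid := cross_identity u v w
  -- LHS = cross u v • w + cross v w • u, in Up unless both coeffs zero
  have hUneg : Up (-(cross u w • v)) := by
    have : -(cross u w • v) = (-(cross u w)) • v := by rw [neg_smul]
    rw [this]
    exact Up.smul (by linarith) hv
  rcases lt_or_eq_of_le h1 with h1' | h1'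
  · rcases lt_or_eq_of_le h2 with h2' | h2'
    · exact Up.not_neg ((Up.smul h1' hw).add (Up.smul h2' hu)) (by rw [hid]; exact hUneg)
    · have : cross u v • w = cross u w • v := by rw [← hid, ← h2', zero_smul, add_zero]
      exact Up.not_neg (Up.smul h1' hw) (by rw [this]; exact hUneg)
  · rcases lt_or_eq_of_le h2 with h2' | h2'
    · have : cross v w • u = cross u w • v := by rw [← hid, ← h1', zero_smul, zero_add]
      exact Up.not_neg (Up.smul h2' hu) (by rw [this]; exact hUneg)
    · have : (0 : ℝ × ℝ) = cross u w • v := by rw [← hid, ← h1', ← h2']; simp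
      have := this ▸ (smul_ne_zero (by linarith : cross u w ≠ 0) hv.ne_zero)
      exact this rfl

lemma trans_gt {u v w : ℝ × ℝ} (hu : Up u) (hv : Up v) (hw : Up w)
    (h1 : 0 < cross u v) (h2 : 0 < cross v w) : 0 < cross u w := by
  rcases lt_or_eq_of_le (trans_ge hu hv hw h1.le h2.le) with h | h
  · exact h
  · exfalso
    obtain ⟨t, ht, rfl⟩ := same_ray hu hw h.symm
    have : cross v (t • u) = t * cross v u := by unfold cross; simp [Prod.smul_def, smul_eq_mul]; ring
    rw [this] at h2
    have : cross v u = - cross u v := by rw [cross_anticomm]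
    nlinarith


lemma cross_smul_left (t : ℝ) (u v : ℝ × ℝ) : cross (t • u) v = t * cross u v := by
  unfold cross
  have e1 : (t • u).1 = t * u.1 := rfl
  have e2 : (t • u).2 = t * u.2 := rfl
  rw [e1, e2]; ring

lemma cross_smul_right (t : ℝ) (u v : ℝ × ℝ) : cross u (t • v) = t * cross u v := by
  unfold cross
  have e1 : (t • v).1 = t * v.1 := rfl
  have e2 : (t • v).2 = t * v.2 := rfl
  rw [e1, e2]; ring

lemma nsq_smul (t : ℝ) (u : ℝ × ℝ) : nsq (t • u) = t ^ 2 * nsq u := by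
  unfold nsq
  have e1 : (t • u).1 = t * u.1 := rfl
  have e2 : (t • u).2 = t * u.2 := rfl
  rw [e1, e2]; ring

/-- The sweep order around the origin: by angle, ties by distance
(reversed distance in the class of the reference direction `vw`). -/
def Rv (vw u v : ℝ × ℝ) : Prop :=
  0 < cross u v ∨ (cross u v = 0 ∧
    ((cross u vw = 0 ∧ nsq v ≤ nsq u) ∨ (cross u vw ≠ 0 ∧ nsq u ≤ nsq v)))

lemma class_eq {u v : ℝ × ℝ} (vw : ℝ × ℝ) (hu : Up u) (hv : Up v) (h : cross u v = 0) :
    (cross v vw = 0 ↔ cross u vw = 0) := by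
  obtain ⟨t, ht, rfl⟩ := same_ray hu hv h
  rw [cross_smul_left]
  constructor
  · intro h'
    rcases mul_eq_zero.mp h' with h' | h'
    · linarith
    · exact h'
  · intro h'; rw [h']; ring

lemma Rv_refl (vw u : ℝ × ℝ) : Rv vw u u := by
  right
  refine ⟨cross_self u, ?_⟩
  by_cases h : cross u vw = 0
  · exact Or.inl ⟨h, le_refl _⟩
  · exact Or.inr ⟨h, le_refl _⟩

lemma Rv_total {u v : ℝ × ℝ} (vw : ℝ × ℝ) (hu : Up u) (hv : Up v) : Rv vw u v ∨ Rv vw v u := by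
  rcases lt_trichotomy (cross u v) 0 with h | h | h
  · right; left
    rw [cross_anticomm]; linarith
  · have hcl := class_eq vw hu hv h
    have hvu : cross v u = 0 := by rw [cross_anticomm, h]; ring
    by_cases hW : cross u vw = 0
    · rcases le_total (nsq u) (nsq v) with hn | hn
      · right; right; exact ⟨hvu, Or.inl ⟨hcl.mpr hW, hn⟩⟩
      · left; right; exact ⟨h, Or.inl ⟨hW, hn⟩⟩
    · rcases le_total (nsq u) (nsq v) with hn | hn
      · left; right; exact ⟨h, Or.inr ⟨hW, hn⟩⟩
      · right; right
        exact ⟨hvu, Or.inr ⟨fun hc => hW (hcl.mp hc), hn⟩⟩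
  · left; left; exact h

lemma Rv_antisymm {u v : ℝ × ℝ} {vw : ℝ × ℝ} (hu : Up u) (hv : Up v)
    (h1 : Rv vw u v) (h2 : Rv vw v u) : u = v := by
  rcases h1 with h1 | ⟨h1, h1'⟩
  · rcases h2 with h2 | ⟨h2, _⟩
    · rw [cross_anticomm] at h2; linarith
    · rw [cross_anticomm] at h2; linarith
  · rcases h2 with h2 | ⟨h2, h2'⟩
    · rw [cross_anticomm] at h2; linarith
    · -- both cross zero; same class, so nsq equal both ways
      have hcl := class_eq vw hu hv h1
      have hn : nsq u = nsq v := by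
        rcases h1' with ⟨hW, hn1⟩ | ⟨hW, hn1⟩ <;> rcases h2' with ⟨hW2, hn2⟩ | ⟨hW2, hn2⟩ <;>
          first
            | linarith
            | (exfalso; exact hW2 (hcl.mpr hW))
            | (exfalso; exact hW (hcl.mp hW2))
      obtain ⟨t, ht, rfl⟩ := same_ray hu hv h1
      rw [nsq_smul] at hn
      have hnu := hu.nsq_pos
      have h2 : t ^ 2 * nsq u = 1 * nsq u := by linarith
      have h3 : t ^ 2 = (1 : ℝ) := mul_right_cancel₀ hnu.ne' h2
      have h4 : (t - 1) * (t + 1) = 0 := by nlinarith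
      rcases mul_eq_zero.mp h4 with h5 | h5
      · have : t = 1 := by linarith
        rw [this, one_smul]
      · exfalso; linarith

lemma Rv_trans {u v w' : ℝ × ℝ} {vw : ℝ × ℝ} (hu : Up u) (hv : Up v) (hw : Up w')
    (h1 : Rv vw u v) (h2 : Rv vw v w') : Rv vw u w' := by
  rcases h1 with h1 | ⟨h1, h1'⟩
  · rcases h2 with h2 | ⟨h2, _⟩
    · exact Or.inl (trans_gt hu hv hw h1 h2)
    · obtain ⟨t, ht, rfl⟩ := same_ray hv hw h2
      left
      rw [cross_smul_right]
      positivity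
  · obtain ⟨t, ht, rfl⟩ := same_ray hu hv h1
    rcases h2 with h2 | ⟨h2, h2'⟩
    · rw [cross_smul_left] at h2
      left
      nlinarith
    · right
      rw [cross_smul_left] at h2
      have hc : cross u w' = 0 := by
        rcases mul_eq_zero.mp (by nlinarith : t * cross u w' = 0) with h | h
        · exfalso; linarith
        · exact h
      refine ⟨hc, ?_⟩
      rw [nsq_smul] at *
      have hcl : cross (t • u) vw = t * cross u vw := cross_smul_left _ _ _
      rcases h1' with ⟨hW, hn1⟩ | ⟨hW, hn1⟩
      · left
        refine ⟨hW, ?_⟩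
        rcases h2' with ⟨hW2, hn2⟩ | ⟨hW2, hn2⟩
        · linarith
        · exfalso; apply hW2; rw [hcl, hW]; ring
      · right
        refine ⟨hW, ?_⟩
        rcases h2' with ⟨hW2, hn2⟩ | ⟨hW2, hn2⟩
        · exfalso
          rw [hcl] at hW2
          rcases mul_eq_zero.mp hW2 with h | h
          · linarith
          · exact hW h
        · linarith

set_option maxHeartbeats 1000000 in
/-- key geometric fact: a point strictly inside a segment is strictly between
the endpoints in the sweep order. -/
lemma middle {u v m vw : ℝ × ℝ} (hu : Up u) (hv : Up v) (hne : u ≠ v)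
    (hR : Rv vw u v) {t : ℝ} (ht0 : 0 < t) (ht1 : t < 1)
    (hm : m = (1 - t) • u + t • v) : ¬ Rv vw m u ∧ ¬ Rv vw v m := by
  have e1 : ((1 - t) • u + t • v).1 = (1 - t) * u.1 + t * v.1 := rfl
  have e2 : ((1 - t) • u + t • v).2 = (1 - t) * u.2 + t * v.2 := rfl
  have hcum : cross u m = t * cross u v := by
    rw [hm]; unfold cross; rw [e1, e2]; ring
  have hcmv : cross m v = (1 - t) * cross u v := by
    rw [hm]; unfold cross; rw [e1, e2]; ring
  rcases hR with hR | ⟨hc, hR⟩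
  · constructor
    · rintro (h | ⟨h, -⟩)
      · rw [cross_anticomm, hcum] at h; nlinarith
      · rw [cross_anticomm, hcum] at h; nlinarith
    · rintro (h | ⟨h, -⟩)
      · rw [cross_anticomm, hcmv] at h; nlinarith
      · rw [cross_anticomm, hcmv] at h; nlinarith
  · -- collinear class case
    obtain ⟨s, hs, rfl⟩ := same_ray hu hv hc
    have hs1 : s ≠ 1 := by
      intro h; rw [h, one_smul] at hne; exact hne rfl
    have hmeq : m = (1 - t + t * s) • u := by
      rw [hm, smul_smul, ← add_smul]
    set σ := 1 - t + t * s with hσ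
    have hσpos : 0 < σ := by
      have := mul_pos ht0 hs
      simp only [hσ]; nlinarith
    have hnu := hu.nsq_pos
    have hcmu : cross m u = 0 := by rw [hmeq, cross_smul_left, cross_self]; ring
    have hcvm : cross (s • u) m = 0 := by
      rw [hmeq, cross_smul_right, cross_smul_left, cross_self]; ring
    have hclm : cross m vw = σ * cross u vw := by rw [hmeq, cross_smul_left]
    have hclv : cross (s • u) vw = s * cross u vw := cross_smul_left _ _ _
    have hnm : nsq m = σ ^ 2 * nsq u := by rw [hmeq, nsq_smul]
    have hnv : nsq (s • u) = s ^ 2 * nsq u := nsq_smul _ _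
    rcases hR with ⟨hW, hn⟩ | ⟨hW, hn⟩
    · -- in the class of vw : nsq (s•u) ≤ nsq u, so s < 1, σ ∈ (s, 1)
      rw [hnv] at hn
      have hslt : s < 1 := by
        rcases lt_trichotomy s 1 with h | h | h
        · exact h
        · exact absurd h hs1
        · exfalso
          have h2 : (1 : ℝ) < s ^ 2 := by nlinarith
          nlinarith [mul_lt_mul_of_pos_right h2 hnu]
      have hσlt : σ < 1 := by
        have := mul_pos ht0 (show (0:ℝ) < 1 - s by linarith)
        simp only [hσ]; nlinarith
      have hσgt : s < σ := by
        have := mul_pos (show (0:ℝ) < 1 - t by linarith) (show (0:ℝ) < 1 - s by linarith)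
        simp only [hσ]; nlinarith
      constructor
      · rintro (h | ⟨-, hcase⟩)
        · rw [hcmu] at h; linarith
        · rcases hcase with ⟨hW2, hn2⟩ | ⟨hW2, hn2⟩
          · rw [hnm] at hn2
            nlinarith [mul_lt_mul_of_pos_right (show σ ^ 2 < 1 by nlinarith) hnu]
          · exact hW2 (by rw [hclm, hW]; ring)
      · rintro (h | ⟨-, hcase⟩)
        · rw [hcvm] at h; linarith
        · rcases hcase with ⟨hW2, hn2⟩ | ⟨hW2, hn2⟩
          · rw [hnm, hnv] at hn2
            nlinarith [mul_lt_mul_of_pos_right (show s ^ 2 < σ ^ 2 by nlinarith) hnu]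
          · exact hW2 (by rw [hclv, hW]; ring)
    · -- not in the class of vw : nsq u ≤ nsq (s•u), so s > 1, σ ∈ (1, s)
      rw [hnv] at hn
      have hsgt : 1 < s := by
        rcases lt_trichotomy 1 s with h | h | h
        · exact h
        · exact absurd h.symm hs1
        · exfalso
          have h2 : s ^ 2 < 1 := by nlinarith
          nlinarith [mul_lt_mul_of_pos_right h2 hnu]
      have hσgt : 1 < σ := by
        have := mul_pos ht0 (show (0:ℝ) < s - 1 by linarith)
        simp only [hσ]; nlinarith
      have hσlt : σ < s := by
        have := mul_pos (show (0:ℝ) < 1 - t by linarith) (show (0:ℝ) < s - 1 by linarith)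
        simp only [hσ]; nlinarith
      have hWm : cross m vw ≠ 0 := by
        rw [hclm]
        intro h
        rcases mul_eq_zero.mp h with h | h
        · linarith
        · exact hW h
      have hWv : cross (s • u) vw ≠ 0 := by
        rw [hclv]
        intro h
        rcases mul_eq_zero.mp h with h | h
        · linarith
        · exact hW h
      constructor
      · rintro (h | ⟨-, hcase⟩)
        · rw [hcmu] at h; linarith
        · rcases hcase with ⟨hW2, hn2⟩ | ⟨hW2, hn2⟩
          · exact hWm hW2
          · rw [hnm] at hn2
            nlinarith [mul_lt_mul_of_pos_right (show (1:ℝ) < σ ^ 2 by nlinarith) hnu]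
      · rintro (h | ⟨-, hcase⟩)
        · rw [hcvm] at h; linarith
        · rcases hcase with ⟨hW2, hn2⟩ | ⟨hW2, hn2⟩
          · exact hWv hW2
          · rw [hnm, hnv] at hn2
            nlinarith [mul_lt_mul_of_pos_right (show σ ^ 2 < s ^ 2 by nlinarith) hnu]


open SimpleGraph


open SimpleGraph

/-- build a walk from a chain of adjacencies -/
def buildWalk {V : Type*} {G : SimpleGraph V} :
    (a : V) → (l : List V) → (b : V) → List.Chain G.Adj a (l ++ [b]) → G.Walk a b
  | _, [], _, h => Walk.cons (List.chain_cons.mp h).1 Walk.nil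
  | _, c :: l, b, h =>
    Walk.cons (List.chain_cons.mp h).1 (buildWalk c l b (List.chain_cons.mp h).2)

lemma buildWalk_support {V : Type*} {G : SimpleGraph V} :
    ∀ (a : V) (l : List V) (b : V) (h : List.Chain G.Adj a (l ++ [b])),
      (buildWalk a l b h).support = a :: (l ++ [b])
  | _, [], _, _ => rfl
  | a, c :: l, b, h => by
    show (Walk.cons _ (buildWalk c l b _)).support = _
    rw [Walk.support_cons]
    exact congrArg (a :: ·) (buildWalk_support c l b _)

lemma buildWalk_not_mem_edges {V : Type*} {G : SimpleGraph V}
    (a : V) (l : List V) (b : V) (h : List.Chain G.Adj a (l ++ [b]))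
    (hal : a ∉ l) (hbl : b ∉ l) (hab : a ≠ b) (hlne : l ≠ []) :
    s(b, a) ∉ (buildWalk a l b h).edges := by
  cases l with
  | nil => exact absurd rfl hlne
  | cons c l' =>
    intro hmem
    have : (buildWalk a (c :: l') b h) =
        Walk.cons (List.chain_cons.mp h).1 (buildWalk c l' b (List.chain_cons.mp h).2) := rfl
    rw [this, Walk.edges_cons] at hmem
    rcases List.mem_cons.mp hmem with heq | hmem'
    · rw [Sym2.eq_iff] at heq
      rcases heq with ⟨h1, -⟩ | ⟨h1, -⟩
      · exact hab h1.symm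
      · exact hbl (h1 ▸ List.mem_cons_self (a := c) (l := l'))
    · have := Walk.snd_mem_support_of_mem_edges _ hmem'
      replace this := Eq.mp (congrArg (a ∈ ·) (buildWalk_support c l' b (List.chain_cons.mp h).2)) this
      rcases List.mem_cons.mp this with h1 | h1
      · exact hal (h1 ▸ List.mem_cons_self (a := c) (l := l'))
      · rcases List.mem_append.mp h1 with h2 | h2
        · exact hal (List.mem_cons_of_mem c h2)
        · exact hab (List.mem_singleton.mp h2)

lemma pairwise_getLast {α : Type*} {R : α → α → Prop} {l : List α} (h : l.Pairwise R)
    (hne : l ≠ []) {x : α} (hx : x ∈ l) (hxne : x ≠ l.getLast hne) : R x (l.getLast hne) := by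
  obtain ⟨i, rfl⟩ := List.mem_iff_get.mp hx
  have hlen : 0 < l.length := List.length_pos_iff.mpr hne
  have hglast : l.getLast hne = l.get ⟨l.length - 1, by omega⟩ := List.getLast_eq_getElem hne
  have hine : (i : ℕ) ≠ l.length - 1 := by
    intro hcon
    apply hxne
    rw [hglast]
    congr 1
    exact Fin.ext hcon
  have hilt : (i : ℕ) < l.length - 1 := by have := i.isLt; omega
  rw [hglast]
  exact List.pairwise_iff_get.mp h i ⟨l.length - 1, by omega⟩ (Fin.lt_def.mpr hilt)


lemma exists_maxdir (p : ℝ × ℝ) (S : Finset (ℝ × ℝ)) :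
    S.Nonempty → (∀ q ∈ S, Up (q - p)) →
    ∃ w ∈ S, ∀ q ∈ S, 0 ≤ cross (q - p) (w - p) := by
  classical
  induction S using Finset.induction_on with
  | empty => intro h; exact absurd h (by simp)
  | insert a s hnotmem ih =>
    intro _ hU
    by_cases hs : s.Nonempty
    · obtain ⟨w, hwS, hwmax⟩ := ih hs (fun q hq => hU q (Finset.mem_insert_of_mem hq))
      have hUa : Up (a - p) := hU a (Finset.mem_insert_self a s)
      have hUw : Up (w - p) := hU w (Finset.mem_insert_of_mem hwS)
      by_cases h0 : 0 ≤ cross (a - p) (w - p)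
      · refine ⟨w, Finset.mem_insert_of_mem hwS, ?_⟩
        intro q hq
        rcases Finset.mem_insert.mp hq with rfl | hq'
        · exact h0
        · exact hwmax q hq'
      · refine ⟨a, Finset.mem_insert_self a s, ?_⟩
        intro q hq
        rcases Finset.mem_insert.mp hq with rfl | hq'
        · rw [cross_self]
        · have hwa : 0 ≤ cross (w - p) (a - p) := by
            rw [cross_anticomm] at h0
            push_neg at h0
            linarith
          exact trans_ge (hU q (Finset.mem_insert_of_mem hq')) hUw hUa (hwmax q hq') hwa
    · rw [Finset.not_nonempty_iff_eq_empty] at hs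
      subst hs
      refine ⟨a, Finset.mem_insert_self a _, ?_⟩
      intro q hq
      rcases Finset.mem_insert.mp hq with rfl | hq'
      · rw [cross_self]
      · exact absurd hq' (by simp)

theorem main_theorem (P : Finset (ℝ × ℝ)) (hcard : 3 ≤ P.card)
    (hcol : ¬ Collinear ℝ (P : Set (ℝ × ℝ))) :
    ∃ (v : {x : ℝ × ℝ // x ∈ P}) (c : (PVG P).Walk v v), c.IsHamiltonianCycle := by
  classical
  have hPne : P.Nonempty := Finset.card_pos.mp (by omega)
  obtain ⟨p, hpP, hpmin⟩ := P.exists_min_image (fun q => toLex (q.2, q.1)) hPne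
  set S := P.erase p with hSdef
  have hUS : ∀ q ∈ S, Up (q - p) := by
    intro q hq
    have hqP : q ∈ P := Finset.mem_of_mem_erase hq
    have hqne : q ≠ p := Finset.ne_of_mem_erase hq
    have hle := hpmin q hqP
    rw [Prod.Lex.le_iff] at hle
    have e1 : (q - p).1 = q.1 - p.1 := rfl
    have e2 : (q - p).2 = q.2 - p.2 := rfl
    rcases hle with h | ⟨h1, h2⟩
    · left; rw [e2]; change p.2 < q.2 at h; linarith
    · change p.2 = q.2 at h1; change p.1 ≤ q.1 at h2
      right
      refine ⟨by rw [e2]; linarith, ?_⟩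
      rw [e1]
      rcases lt_or_eq_of_le h2 with h3 | h3
      · linarith
      · exfalso; exact hqne (Prod.ext h3.symm h1.symm)
  have hpnotS : p ∉ S := Finset.notMem_erase p P
  have hScard : 2 ≤ S.card := by
    rw [hSdef, Finset.card_erase_of_mem hpP]; omega
  have hSne : S.Nonempty := Finset.card_pos.mp (by omega)
  obtain ⟨w, hwS, hwmax⟩ := exists_maxdir p S hSne hUS
  set vw := w - p with hvwdef
  have hUvw : Up vw := hUS w hwS
  have hQex : ∃ q ∈ S, cross (q - p) vw ≠ 0 := by
    by_contra hcon
    push_neg at hcon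
    apply hcol
    rw [collinear_iff_of_mem (Finset.mem_coe.mpr hpP)]
    refine ⟨vw, ?_⟩
    intro x hx
    by_cases hxp : x = p
    · exact ⟨0, by simp [hxp]⟩
    · have hxS : x ∈ S := Finset.mem_erase.mpr ⟨hxp, hx⟩
      have h0 : cross vw (x - p) = 0 := by
        have h1 := hcon x hxS
        rw [cross_anticomm] at h1
        linarith
      obtain ⟨t, -, ht⟩ := same_ray hUvw (hUS x hxS) h0
      exact ⟨t, by rw [← ht]; simp⟩
  -- sort the points of S around p
  have hUel : ∀ a : {x : ℝ × ℝ // x ∈ S}, Up (a.1 - p) := fun a => hUS a.1 a.2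
  set le : {x : ℝ × ℝ // x ∈ S} → {x : ℝ × ℝ // x ∈ S} → Bool :=
    fun a b => decide (Rv vw (a.1 - p) (b.1 - p)) with hledef
  have htrans : ∀ a b c, le a b = true → le b c = true → le a c = true := by
    intro a b c h1 h2
    rw [hledef, decide_eq_true_iff] at *
    exact Rv_trans (hUel a) (hUel b) (hUel c) h1 h2
  have htotal : ∀ a b, le a b || le b a := by
    intro a b
    rcases Rv_total vw (hUel a) (hUel b) with h | h
    · have : le a b = true := by rw [hledef]; exact decide_eq_true h
      simp [this]
    · have : le b a = true := by rw [hledef]; exact decide_eq_true h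
      simp [this]
  set lS := S.attach.toList.mergeSort le with hlSdef
  have hpermS : List.Perm lS S.attach.toList := List.mergeSort_perm _ _
  have hsortedS : lS.Pairwise (fun a b => le a b = true) :=
    List.pairwise_mergeSort htrans htotal S.attach.toList
  set L := lS.map Subtype.val with hLdef
  have hpairwise : L.Pairwise (fun a b => Rv vw (a - p) (b - p)) := by
    rw [hLdef, List.pairwise_map]
    exact hsortedS.imp (fun h => decide_eq_true_iff.mp h)
  have hmemL : ∀ x, x ∈ L ↔ x ∈ S := by
    intro x
    rw [hLdef, List.mem_map]
    constructor
    · rintro ⟨u, -, rfl⟩; exact u.2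
    · intro hx
      exact ⟨⟨x, hx⟩, hpermS.mem_iff.mpr (by simp [Finset.mem_toList]), rfl⟩
  have hnodupL : L.Nodup := by
    rw [hLdef]
    refine (List.Perm.nodup_iff (List.Perm.map _ hpermS)).mpr ?_
    exact (Finset.nodup_toList _).map Subtype.val_injective
  have hlenL : L.length = S.card := by
    rw [hLdef, List.length_map, hpermS.length_eq, Finset.length_toList, Finset.card_attach]
  have hpL : p ∉ L := fun h => hpnotS ((hmemL p).mp h)
  clear_value lS L
  clear hsortedS hpermS hlSdef hLdef htotal htrans hledef
  -- decompose L
  obtain ⟨a0, rest, rfl⟩ : ∃ a0 rest, L = a0 :: rest := by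
    cases hL : L with
    | nil => rw [hL] at hlenL; simp at hlenL; omega
    | cons a r => exact ⟨a, r, rfl⟩
  have hrestne : rest ≠ [] := by
    intro h
    rw [h] at hlenL
    simp at hlenL
    omega
  have ha0L : a0 ∈ a0 :: rest := List.mem_cons_self
  have ha0S : a0 ∈ S := (hmemL a0).mp ha0L
  have hUa0 : Up (a0 - p) := hUS a0 ha0S
  have hLne : (a0 :: rest : List (ℝ × ℝ)) ≠ [] := by simp
  set aL := (a0 :: rest).getLast hLne with haLdef
  have haLL : aL ∈ a0 :: rest := List.getLast_mem hLne
  have haLS : aL ∈ S := (hmemL aL).mp haLL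
  have hUaL : Up (aL - p) := hUS aL haLS
  -- the first point is not in the class of w
  have hfirstW : cross (a0 - p) vw ≠ 0 := by
    intro hcon
    obtain ⟨q, hqS, hqW⟩ := hQex
    have hqL : q ∈ a0 :: rest := (hmemL q).mpr hqS
    have hqa0 : q ≠ a0 := by
      intro h; rw [h] at hqW; exact hqW hcon
    have hqrest : q ∈ rest := by
      rcases List.mem_cons.mp hqL with h | h
      · exact absurd h hqa0
      · exact h
    have hR : Rv vw (a0 - p) (q - p) := (List.pairwise_cons.mp hpairwise).1 q hqrest
    have h0 : cross vw (a0 - p) = 0 := by rw [cross_anticomm, hcon]; ring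
    obtain ⟨t, ht, hteq⟩ := same_ray hUvw hUa0 h0
    rcases hR with hR | ⟨hR, -⟩
    · rw [hteq, cross_smul_left] at hR
      have h1 : 0 ≤ cross (q - p) vw := hwmax q hqS
      rw [cross_anticomm] at h1
      nlinarith
    · exact hqW ((class_eq vw hUa0 (hUS q hqS) hR).mpr hcon)
  -- the last point is in the class of w
  have hlastW : cross (aL - p) vw = 0 := by
    by_cases hwaL : w = aL
    · rw [← hwaL, ← hvwdef, cross_self]
    · have hwL : w ∈ a0 :: rest := (hmemL w).mpr hwS
      have hR : Rv vw (w - p) (aL - p) := pairwise_getLast hpairwise hLne hwL hwaL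
      rcases hR with hR | ⟨hR, -⟩
      · exfalso
        have h1 := hwmax aL haLS
        rw [cross_anticomm] at h1
        rw [← hvwdef] at hR
        linarith
      · rw [← hvwdef] at hR
        obtain ⟨t, ht, hteq⟩ := same_ray hUvw hUaL hR
        rw [hteq, cross_smul_left, StarPoly.cross_self]; ring
  -- segment membership rewriting
  have hsub : ∀ (x y r : ℝ × ℝ) (θ : ℝ), (1 - θ) • x + θ • y = r →
      r - p = (1 - θ) • (x - p) + θ • (y - p) := by
    intro x y r θ h
    have h1 : r.1 = (1 - θ) * x.1 + θ * y.1 := by rw [← h]; rfl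
    have h2 : r.2 = (1 - θ) * x.2 + θ * y.2 := by rw [← h]; rfl
    have e1 : ((1 - θ) • (x - p) + θ • (y - p)).1 = (1 - θ) * (x.1 - p.1) + θ * (y.1 - p.1) := rfl
    have e2 : ((1 - θ) • (x - p) + θ • (y - p)).2 = (1 - θ) * (x.2 - p.2) + θ * (y.2 - p.2) := rfl
    ext
    · rw [e1]
      show r.1 - p.1 = _
      rw [h1]; ring
    · rw [e2]
      show r.2 - p.2 = _
      rw [h2]; ring
  -- piece 1 : p sees the first point
  have hva : Visible P p a0 := by
    refine ⟨fun h => hpnotS (by rw [h]; exact ha0S), ?_⟩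
    intro r hrP hmem
    rw [openSegment_eq_image] at hmem
    obtain ⟨θ, ⟨hθ0, hθ1⟩, heq⟩ := hmem
    have h2 := hsub p a0 r θ heq
    rw [sub_self, smul_zero, zero_add] at h2
    have hrne : r ≠ p := by
      intro h
      rw [h, sub_self] at h2
      exact (smul_ne_zero (ne_of_gt hθ0) hUa0.ne_zero) h2.symm
    have hrS : r ∈ S := Finset.mem_erase.mpr ⟨hrne, hrP⟩
    have hrL : r ∈ a0 :: rest := (hmemL r).mpr hrS
    have hrna0 : r ≠ a0 := by
      intro h
      rw [h] at h2
      have h3 : (1 - θ) • (a0 - p) = 0 := by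
        rw [sub_smul, one_smul]
        rw [← h2]
        rw [sub_self]
      exact (smul_ne_zero (by intro h4; linarith : (1:ℝ) - θ ≠ 0) hUa0.ne_zero) h3
    have hrrest : r ∈ rest := by
      rcases List.mem_cons.mp hrL with h | h
      · exact absurd h hrna0
      · exact h
    have hR : Rv vw (a0 - p) (r - p) := (List.pairwise_cons.mp hpairwise).1 r hrrest
    have hcra : cross (a0 - p) (r - p) = 0 := by rw [h2, cross_smul_right, StarPoly.cross_self]; ring
    have hnsq : nsq (r - p) < nsq (a0 - p) := by
      rw [h2, nsq_smul]
      have hθ2 : θ ^ 2 < 1 := by nlinarith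
      nlinarith [mul_lt_mul_of_pos_right hθ2 hUa0.nsq_pos]
    rcases hR with hR | ⟨-, hcase⟩
    · exact lt_irrefl 0 (hcra ▸ hR)
    · rcases hcase with ⟨hW2, -⟩ | ⟨-, hn2⟩
      · exact hfirstW hW2
      · linarith
  -- piece 3 : the last point sees p
  have hvb : Visible P aL p := by
    refine ⟨fun h => hpnotS (by rw [← h]; exact haLS), ?_⟩
    intro r hrP hmem
    rw [openSegment_eq_image] at hmem
    obtain ⟨θ, ⟨hθ0, hθ1⟩, heq⟩ := hmem
    have h2 := hsub aL p r θ heq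
    rw [sub_self, smul_zero, add_zero] at h2
    have hco : (0:ℝ) < 1 - θ := by linarith
    have hrne : r ≠ p := by
      intro h
      rw [h, sub_self] at h2
      exact (smul_ne_zero (ne_of_gt hco) hUaL.ne_zero) h2.symm
    have hrS : r ∈ S := Finset.mem_erase.mpr ⟨hrne, hrP⟩
    have hrL : r ∈ a0 :: rest := (hmemL r).mpr hrS
    have hrnaL : r ≠ aL := by
      intro h
      rw [h] at h2
      have hn := congrArg nsq h2
      rw [nsq_smul] at hn
      have hθ2 : (1 - θ) ^ 2 < 1 := by nlinarith
      nlinarith [mul_lt_mul_of_pos_right hθ2 hUaL.nsq_pos]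
    have hR : Rv vw (r - p) (aL - p) := pairwise_getLast hpairwise hLne hrL hrnaL
    have hcr : cross (r - p) (aL - p) = 0 := by rw [h2, cross_smul_left, StarPoly.cross_self]; ring
    have hclr : cross (r - p) vw = 0 := by rw [h2, cross_smul_left, hlastW]; ring
    have hnsq : nsq (r - p) < nsq (aL - p) := by
      rw [h2, nsq_smul]
      have hθ2 : (1 - θ) ^ 2 < 1 := by nlinarith
      nlinarith [mul_lt_mul_of_pos_right hθ2 hUaL.nsq_pos]
    rcases hR with hR | ⟨-, hcase⟩
    · exact lt_irrefl 0 (hcr ▸ hR)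
    · rcases hcase with ⟨-, hn2⟩ | ⟨hW2, -⟩
      · linarith
      · exact hW2 hclr
  -- piece 2 : consecutive points see each other
  have hchainL : List.Chain' (Visible P) (a0 :: rest) := by
    show List.IsChain (Visible P) (a0 :: rest)
    rw [List.isChain_iff_getElem]
    intro i hi
    have hil : i < (a0 :: rest).length := by omega
    have hil2 : i + 1 < (a0 :: rest).length := by omega
    set x := (a0 :: rest).get ⟨i, hil⟩ with hxdef
    set y := (a0 :: rest).get ⟨i + 1, hil2⟩ with hydef
    show Visible P x y
    have hxL : x ∈ a0 :: rest := by rw [hxdef]; exact List.get_mem _ _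
    have hyL : y ∈ a0 :: rest := by rw [hydef]; exact List.get_mem _ _
    have hxS : x ∈ S := (hmemL x).mp hxL
    have hyS : y ∈ S := (hmemL y).mp hyL
    have hUx := hUS x hxS
    have hUy := hUS y hyS
    have hxy : x ≠ y := by
      intro h
      have h3 := hnodupL.get_inj_iff.mp h
      have h4 := congrArg Fin.val h3
      simp at h4
    have hRxy : Rv vw (x - p) (y - p) :=
      List.pairwise_iff_get.mp hpairwise ⟨i, hil⟩ ⟨i + 1, hil2⟩ (by simp [Fin.lt_def])
    refine ⟨hxy, ?_⟩
    intro r hrP hmem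
    rw [openSegment_eq_image] at hmem
    obtain ⟨θ, ⟨hθ0, hθ1⟩, heq⟩ := hmem
    have h2 := hsub x y r θ heq
    have hrne : r ≠ p := by
      intro h
      rw [h, sub_self] at h2
      have h3 : Up ((1 - θ) • (x - p) + θ • (y - p)) :=
        Up.add (Up.smul (by linarith) hUx) (Up.smul hθ0 hUy)
      exact h3.ne_zero h2.symm
    have hrS : r ∈ S := Finset.mem_erase.mpr ⟨hrne, hrP⟩
    have hrL : r ∈ a0 :: rest := (hmemL r).mpr hrS
    have hrx : r ≠ x := by
      intro h
      have hmem2 : x ∈ openSegment ℝ x y := by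
        rw [openSegment_eq_image]
        exact ⟨θ, ⟨hθ0, hθ1⟩, by rw [heq, h]⟩
      exact hxy (left_mem_openSegment_iff.mp hmem2)
    have hry : r ≠ y := by
      intro h
      have hmem2 : y ∈ openSegment ℝ x y := by
        rw [openSegment_eq_image]
        exact ⟨θ, ⟨hθ0, hθ1⟩, by rw [heq, h]⟩
      exact hxy (right_mem_openSegment_iff.mp hmem2)
    obtain ⟨hnot1, hnot2⟩ :=
      middle hUx hUy (fun h => hxy (by rwa [sub_left_inj] at h)) hRxy hθ0 hθ1 h2
    obtain ⟨j, hjget⟩ := List.mem_iff_get.mp hrL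
    have hji : (j : ℕ) ≠ i := by
      intro h
      apply hrx
      rw [← hjget, hxdef]
      congr 1
      exact Fin.ext h
    have hji2 : (j : ℕ) ≠ i + 1 := by
      intro h
      apply hry
      rw [← hjget, hydef]
      congr 1
      exact Fin.ext h
    rcases lt_trichotomy (j : ℕ) i with hlt | heqi | hgt
    · apply hnot1
      have := List.pairwise_iff_get.mp hpairwise j ⟨i, hil⟩ (by simpa [Fin.lt_def] using hlt)
      rwa [hjget] at this
    · exact hji heqi
    · apply hnot2
      have hgt2 : i + 1 < (j : ℕ) := by omega
      have := List.pairwise_iff_get.mp hpairwise ⟨i + 1, hil2⟩ j (by simpa [Fin.lt_def] using hgt2)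
      rwa [hjget] at this
  -- assemble the full chain
  have hchainfull : List.Chain' (Visible P) (p :: ((a0 :: rest) ++ [p])) := by
    show List.IsChain (Visible P) (p :: ((a0 :: rest) ++ [p]))
    rw [List.isChain_cons]
    constructor
    · intro yy hyy
      have : yy = a0 := by
        simp only [List.cons_append, List.head?_cons, Option.mem_def, Option.some_inj] at hyy
        exact hyy.symm
      rw [this]; exact hva
    · rw [List.isChain_append]
      refine ⟨hchainL, List.isChain_singleton p, ?_⟩
      intro xx hxx yy hyy
      have hxx' : xx = aL := by
        rw [List.getLast?_eq_getLast hLne] at hxx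
        simpa using hxx.symm
      have hyy' : yy = p := (by simpa using hyy : p = yy).symm
      rw [hxx', hyy']
      exact hvb
  -- lift everything to the subtype of P
  have hmemP : ∀ x ∈ (a0 :: rest), x ∈ P := fun x hx =>
    Finset.mem_of_mem_erase ((hmemL x).mp hx)
  set pv : {x : ℝ × ℝ // x ∈ P} := ⟨p, hpP⟩ with hpvdef
  set Lv : List {x : ℝ × ℝ // x ∈ P} := (a0 :: rest).attachWith (· ∈ P) hmemP with hLvdef
  have hmapLv : Lv.map Subtype.val = a0 :: rest := by
    rw [hLvdef]; simp [List.attach_map_subtype_val]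
  have hchainv : List.Chain' ((PVG P).Adj) (pv :: Lv ++ [pv]) := by
    have h1 : List.Chain' (fun a b : {x : ℝ × ℝ // x ∈ P} => Visible P a.1 b.1)
        (pv :: Lv ++ [pv]) := by
      show List.IsChain (fun a b : {x : ℝ × ℝ // x ∈ P} => Visible P a.1 b.1) (pv :: Lv ++ [pv])
      rw [← List.isChain_map (f := Subtype.val) (R := Visible P)]
      have h2 : (pv :: Lv ++ [pv]).map Subtype.val = p :: ((a0 :: rest) ++ [p]) := by
        simp [hmapLv, hpvdef]
      rw [h2]
      exact hchainfull
    exact h1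
  set a0v : {x : ℝ × ℝ // x ∈ P} := ⟨a0, hmemP a0 ha0L⟩ with ha0vdef
  set restv : List {x : ℝ × ℝ // x ∈ P} :=
    rest.attachWith (· ∈ P) (fun x hx => hmemP x (List.mem_cons_of_mem _ hx)) with hrestvdef
  have hLveq : Lv = a0v :: restv := rfl
  have hchain2 : List.Chain ((PVG P).Adj) pv (Lv ++ [pv]) := hchainv
  rw [hLveq] at hchain2
  have hchain2' : List.Chain ((PVG P).Adj) pv (a0v :: (restv ++ [pv])) := hchain2
  have hadj1 : (PVG P).Adj pv a0v := (List.chain_cons.mp hchain2').1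
  have hchain3 : List.Chain ((PVG P).Adj) a0v (restv ++ [pv]) := (List.chain_cons.mp hchain2').2
  set Q := buildWalk a0v restv pv hchain3 with hQdef
  have hQsupp : Q.support = a0v :: (restv ++ [pv]) := buildWalk_support _ _ _ _
  have hmaprestv : restv.map Subtype.val = rest := by
    rw [hrestvdef]; simp [List.attach_map_subtype_val]
  have hndfull : ((a0v :: restv) ++ [pv]).Nodup := by
    have hmapfull : ((a0v :: restv) ++ [pv]).map Subtype.val = (a0 :: rest) ++ [p] := by
      simp [hmaprestv, ha0vdef, hpvdef]
    apply List.Nodup.of_map Subtype.val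
    rw [hmapfull]
    refine List.Nodup.append hnodupL (List.nodup_singleton p) ?_
    intro xx hxx hxx'
    rw [List.mem_singleton] at hxx'
    rw [hxx'] at hxx
    exact hpL hxx
  have hQnodup : Q.support.Nodup := by
    rw [hQsupp]
    exact hndfull
  have hQpath : Q.IsPath := SimpleGraph.Walk.IsPath.mk' hQnodup
  have hrestvne : restv ≠ [] := by
    intro h
    apply hrestne
    rw [← hmaprestv, h]
    rfl
  have ha0restv : a0v ∉ restv := by
    intro h
    have : a0 ∈ rest := by
      rw [← hmaprestv]
      exact List.mem_map.mpr ⟨a0v, h, rfl⟩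
    exact (List.nodup_cons.mp hnodupL).1 this
  have hpvrestv : pv ∉ restv := by
    intro h
    have : p ∈ rest := by
      rw [← hmaprestv]
      exact List.mem_map.mpr ⟨pv, h, rfl⟩
    exact hpL (List.mem_cons_of_mem _ this)
  have ha0pv : a0v ≠ pv := by
    intro h
    apply hpnotS
    have : a0 = p := congrArg Subtype.val h
    rw [← this]
    exact ha0S
  have hnotmemedges : s(pv, a0v) ∉ Q.edges :=
    buildWalk_not_mem_edges a0v restv pv hchain3 ha0restv hpvrestv ha0pv hrestvne
  have hcyc : (SimpleGraph.Walk.cons hadj1 Q).IsCycle :=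
    SimpleGraph.Path.cons_isCycle ⟨Q, hQpath⟩ hadj1 hnotmemedges
  refine ⟨pv, SimpleGraph.Walk.cons hadj1 Q, hcyc, ?_⟩
  have htl : (SimpleGraph.Walk.cons hadj1 Q).tail.support = Q.support :=
    SimpleGraph.Walk.support_tail_of_not_nil _ (by simp)
  intro v
  rw [htl, @List.count_eq_one_of_mem _ instBEqOfDecidableEq _]
  · rw [hQsupp]
    exact hndfull
  · rw [hQsupp]
    by_cases hv : v.1 = p
    · have : v = pv := Subtype.ext hv
      rw [this]
      simp
    · have hvS : v.1 ∈ S := Finset.mem_erase.mpr ⟨hv, v.2⟩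
      have hvL : v.1 ∈ a0 :: rest := (hmemL v.1).mpr hvS
      have hvLv : v ∈ a0v :: restv := by
        rw [← hLveq]
        have := List.mem_map.mp (hmapLv ▸ hvL)
        obtain ⟨u, huLv, huv⟩ := this
        rwa [Subtype.ext huv] at huLv
      rcases List.mem_cons.mp hvLv with h | h
      · rw [h]
        exact List.mem_cons_self
      · exact List.mem_cons_of_mem _ (List.mem_append_left _ h)

end StarPoly

theorem stmt_3 (P : Finset (ℝ × ℝ)) (hcard : 3 ≤ P.card)
    (hcol : ¬ Collinear ℝ (P : Set (ℝ × ℝ))) :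
    ∃ (v : {x : ℝ × ℝ // x ∈ P}) (c : (PVG P).Walk v v), c.IsHamiltonianCycle := by
  exact StarPoly.main_theorem P hcard hcol
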